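/- arXiv:1712.10222 — 2 statements merged into one kernel-verified Lean document; each statement's English description precedes it below -/
import Mathlib

section
/- Fix positive reals a, r, ℓ, φ, z and β ∈ (0,1). Define u_B := β·z − φ, u_L := β·z − 3·(a·φ·z²·r²/ℓ²)^{1/3}, and the thresholds t_NL := (27·a·r²/(ℓ²·β³))·φ, t_NB := φ/β, t_LB := (ℓ/√(27·a·r²))·φ. Then: (i) if z < min(t_NL, t_NB) then max(u_L, u_B) < 0 (no transfer is profitable); (ii) if t_NL < z < t_LB then u_L > max(0, u_B) (lightning is the strictly best option); (iii) if z > max(t_NB, t_LB) then u_B > max(0, u_L) (blockchain is the strictly best option). -/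
private lemma cbrt_lt_iff {X c : ℝ} (hX : 0 < X) (hc : 0 < c) :
    X ^ ((1 : ℝ) / 3) < c ↔ X < c ^ 3 := by
  have hp : (0:ℝ) ≤ X ^ ((1:ℝ)/3) := Real.rpow_nonneg hX.le _
  have key : (X ^ ((1:ℝ)/3)) ^ (3:ℕ) = X := by
    rw [← Real.rpow_natCast (X ^ ((1:ℝ)/3)) 3, ← Real.rpow_mul hX.le]; norm_num
  calc X ^ ((1:ℝ)/3) < c ↔ (X ^ ((1:ℝ)/3)) ^ (3:ℕ) < c ^ (3:ℕ) :=
        (pow_lt_pow_iff_left₀ hp hc.le (by norm_num)).symm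
    _ ↔ X < c ^ 3 := by rw [key]

private lemma lt_cbrt_iff {X c : ℝ} (hX : 0 < X) (hc : 0 < c) :
    c < X ^ ((1 : ℝ) / 3) ↔ c ^ 3 < X := by
  have hp : (0:ℝ) ≤ X ^ ((1:ℝ)/3) := Real.rpow_nonneg hX.le _
  have key : (X ^ ((1:ℝ)/3)) ^ (3:ℕ) = X := by
    rw [← Real.rpow_natCast (X ^ ((1:ℝ)/3)) 3, ← Real.rpow_mul hX.le]; norm_num
  calc c < X ^ ((1:ℝ)/3) ↔ c ^ (3:ℕ) < (X ^ ((1:ℝ)/3)) ^ (3:ℕ) :=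
        (pow_lt_pow_iff_left₀ hc.le hp (by norm_num)).symm
    _ ↔ c ^ 3 < X := by rw [key]

/-- Choice of a single pair (symmetric case): below both thresholds no
transfer is profitable; between `t_NL` and `t_LB` lightning is strictly
best; above both `t_NB` and `t_LB` blockchain is strictly best. -/
theorem pair_choice_symmetric (a r ℓ φ z β : ℝ)
    (ha : 0 < a) (hr : 0 < r) (hℓ : 0 < ℓ) (hφ : 0 < φ) (hz : 0 < z)
    (hβ0 : 0 < β) (hβ1 : β < 1) :
    (z < min ((27 * a * r ^ 2 / (ℓ ^ 2 * β ^ 3)) * φ) (φ / β) →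
      max (β * z - 3 * (a * φ * z ^ 2 * r ^ 2 / ℓ ^ 2) ^ ((1 : ℝ) / 3))
        (β * z - φ) < 0) ∧
    ((27 * a * r ^ 2 / (ℓ ^ 2 * β ^ 3)) * φ < z ∧
        z < (ℓ / Real.sqrt (27 * a * r ^ 2)) * φ →
      β * z - 3 * (a * φ * z ^ 2 * r ^ 2 / ℓ ^ 2) ^ ((1 : ℝ) / 3) >
        max 0 (β * z - φ)) ∧
    (z > max (φ / β) ((ℓ / Real.sqrt (27 * a * r ^ 2)) * φ) →
      β * z - φ >
        max 0 (β * z - 3 * (a * φ * z ^ 2 * r ^ 2 / ℓ ^ 2) ^ ((1 : ℝ) / 3))) := by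
  set X : ℝ := a * φ * z ^ 2 * r ^ 2 / ℓ ^ 2 with hXdef
  have hℓ2 : (0:ℝ) < ℓ ^ 2 := by positivity
  have hX : 0 < X := by positivity
  have hs : (0:ℝ) < Real.sqrt (27 * a * r ^ 2) := Real.sqrt_pos.2 (by positivity)
  have hs2 : (Real.sqrt (27 * a * r ^ 2)) ^ 2 = 27 * a * r ^ 2 :=
    Real.sq_sqrt (by positivity)
  -- u_L > 0 ↔ z > t_NL
  have hNL : (27 * a * r ^ 2 / (ℓ ^ 2 * β ^ 3)) * φ < z →
      β * z - 3 * X ^ ((1:ℝ)/3) > 0 := by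
    intro h
    have h3 : X ^ ((1:ℝ)/3) < β * z / 3 := by
      rw [cbrt_lt_iff hX (by positivity), hXdef, div_pow,
        div_lt_div_iff₀ hℓ2 (by norm_num : (0:ℝ) < 3 ^ 3)]
      rw [div_mul_eq_mul_div, div_lt_iff₀ (by positivity)] at h
      nlinarith [mul_pos hz hz]
    nlinarith
  have hNL' : z < (27 * a * r ^ 2 / (ℓ ^ 2 * β ^ 3)) * φ →
      β * z - 3 * X ^ ((1:ℝ)/3) < 0 := by
    intro h
    have h3 : β * z / 3 < X ^ ((1:ℝ)/3) := by
      rw [lt_cbrt_iff hX (by positivity), hXdef, div_pow,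
        div_lt_div_iff₀ (by norm_num : (0:ℝ) < 3 ^ 3) hℓ2]
      rw [div_mul_eq_mul_div, lt_div_iff₀ (by positivity)] at h
      nlinarith [mul_pos hz hz]
    nlinarith
  -- T vs φ ↔ z vs t_LB
  have hLB : z < (ℓ / Real.sqrt (27 * a * r ^ 2)) * φ →
      3 * X ^ ((1:ℝ)/3) < φ := by
    intro h
    have h3 : X ^ ((1:ℝ)/3) < φ / 3 := by
      rw [cbrt_lt_iff hX (by positivity), hXdef, div_pow, div_lt_div_iff₀ hℓ2 (by norm_num : (0:ℝ) < 3 ^ 3)]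
      rw [div_mul_eq_mul_div, lt_div_iff₀ hs] at h
      have key : z ^ 2 * (27 * a * r ^ 2) < ℓ ^ 2 * φ ^ 2 := by
        nlinarith [mul_self_lt_mul_self (by positivity : (0:ℝ) ≤ z * Real.sqrt (27 * a * r ^ 2)) h, hs2]
      nlinarith [mul_lt_mul_of_pos_right key hφ]
    linarith
  have hLB' : (ℓ / Real.sqrt (27 * a * r ^ 2)) * φ < z →
      φ < 3 * X ^ ((1:ℝ)/3) := by
    intro h
    have h3 : φ / 3 < X ^ ((1:ℝ)/3) := by
      rw [lt_cbrt_iff hX (by positivity), hXdef, div_pow, div_lt_div_iff₀ (by norm_num : (0:ℝ) < 3 ^ 3) hℓ2]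
      rw [div_mul_eq_mul_div, div_lt_iff₀ hs] at h
      have key : ℓ ^ 2 * φ ^ 2 < z ^ 2 * (27 * a * r ^ 2) := by
        nlinarith [mul_self_lt_mul_self (by positivity : (0:ℝ) ≤ ℓ * φ) h, hs2]
      nlinarith [mul_lt_mul_of_pos_right key hφ]
    linarith
  refine ⟨?_, ?_, ?_⟩
  · intro h
    have h1 := (lt_min_iff.1 h).1
    have h2 := (lt_min_iff.1 h).2
    have hB : β * z - φ < 0 := by
      rw [lt_div_iff₀ hβ0] at h2; nlinarith
    exact max_lt (hNL' h1) hB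
  · rintro ⟨h1, h2⟩
    have hpos := hNL h1
    have hTφ := hLB h2
    exact max_lt (by linarith) (by linarith)
  · intro h
    have h1 := (max_lt_iff.1 h).1
    have h2 := (max_lt_iff.1 h).2
    have hB : 0 < β * z - φ := by
      rw [div_lt_iff₀ hβ0] at h1; nlinarith
    have hTφ := hLB' h2
    exact max_lt (by linarith) (by linarith)
end

section
/- Fix positive reals z_min, β, ℓ, τ, a, r with β ∈ (0,1), and a natural number n. Define t_LB(φ) := ℓ·φ/√(27·a·r²) and the per-pair demand D(φ) := 3·z_min·(ℓ·a·r²/φ²)^{1/3}·(z_min^{−1/3} − t_LB(φ)^{−1/3}) + ℓ·z_min/t_LB(φ). Then for every φ > 0 one has the identity D(φ) = 3·z_min^{2/3}·(ℓ·a·r²/φ²)^{1/3}, and consequently φ* := z_min·√(27·ℓ·a)·r·(n/(2·τ))^{3/2} satisfies the market-clearing equation (n/2)·D(φ*) = τ. -/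
private lemma pow3_inj {x y : ℝ} (hx : 0 ≤ x) (hy : 0 ≤ y) (h : x ^ 3 = y ^ 3) : x = y := by
  by_contra hne
  rcases lt_or_gt_of_ne hne with hlt | hgt
  · have := pow_lt_pow_left₀ hlt hx (by norm_num : (3 : ℕ) ≠ 0); linarith
  · have := pow_lt_pow_left₀ hgt hy (by norm_num : (3 : ℕ) ≠ 0); linarith

private lemma cube13 (x : ℝ) (hx : 0 ≤ x) : (x ^ ((1 : ℝ) / 3)) ^ 3 = x := by
  rw [← Real.rpow_natCast (x ^ ((1 : ℝ) / 3)) 3, ← Real.rpow_mul hx]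
  norm_num

private lemma cube23 (x : ℝ) (hx : 0 ≤ x) : (x ^ ((2 : ℝ) / 3)) ^ 3 = x ^ 2 := by
  rw [← Real.rpow_natCast (x ^ ((2 : ℝ) / 3)) 3, ← Real.rpow_mul hx]
  norm_num

/-- Market-clearing blockchain fee with lightning (symmetric case): the
per-pair demand simplifies to `3·z_min^{2/3}·(ℓ·a·r²/φ²)^{1/3}`, and the
fee `φ* = z_min·√(27·ℓ·a)·r·(n/(2τ))^{3/2}` clears the market. -/
theorem equilibrium_fee_with_lightning (zmin β ℓ τ a r : ℝ) (n : ℕ)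
    (hzmin : 0 < zmin) (hβ0 : 0 < β) (hβ1 : β < 1) (hℓ : 0 < ℓ)
    (hτ : 0 < τ) (ha : 0 < a) (hr : 0 < r) (hn : 0 < n) :
    (∀ φ : ℝ, 0 < φ →
      3 * zmin * (ℓ * a * r ^ 2 / φ ^ 2) ^ ((1 : ℝ) / 3) *
          (zmin ^ (-(1 : ℝ) / 3) -
            (ℓ * φ / Real.sqrt (27 * a * r ^ 2)) ^ (-(1 : ℝ) / 3)) +
        ℓ * zmin / (ℓ * φ / Real.sqrt (27 * a * r ^ 2))
      = 3 * zmin ^ ((2 : ℝ) / 3) * (ℓ * a * r ^ 2 / φ ^ 2) ^ ((1 : ℝ) / 3)) ∧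
    ((n : ℝ) / 2) *
        (3 * zmin ^ ((2 : ℝ) / 3) *
          (ℓ * a * r ^ 2 /
            (zmin * Real.sqrt (27 * ℓ * a) * r * ((n : ℝ) / (2 * τ)) ^ ((3 : ℝ) / 2)) ^ 2) ^
            ((1 : ℝ) / 3))
      = τ := by
  constructor
  · intro φ hφ
    have hsqpos : 0 < Real.sqrt (27 * a * r ^ 2) := Real.sqrt_pos.2 (by positivity)
    set t : ℝ := ℓ * φ / Real.sqrt (27 * a * r ^ 2) with ht_def
    have ht : 0 < t := by positivity
    set s : ℝ := (ℓ * a * r ^ 2 / φ ^ 2) ^ ((1 : ℝ) / 3) with hs_def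
    have hs : 0 < s := by
      apply Real.rpow_pos_of_pos; positivity
    -- key identity : 3 * s * t^(2/3) = ℓ
    have hkey : 3 * s * t ^ ((2 : ℝ) / 3) = ℓ := by
      apply pow3_inj (by positivity) hℓ.le
      have h1 : s ^ 3 = ℓ * a * r ^ 2 / φ ^ 2 := cube13 _ (by positivity)
      have h2 : (t ^ ((2 : ℝ) / 3)) ^ 3 = t ^ 2 := cube23 _ ht.le
      have hsq : Real.sqrt (27 * a * r ^ 2) ^ 2 = 27 * a * r ^ 2 :=
        Real.sq_sqrt (by positivity)
      have ht2 : t ^ 2 = (ℓ * φ) ^ 2 / (27 * a * r ^ 2) := by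
        rw [ht_def, div_pow, hsq]
      calc (3 * s * t ^ ((2 : ℝ) / 3)) ^ 3 = 27 * s ^ 3 * (t ^ ((2 : ℝ) / 3)) ^ 3 := by ring
        _ = 27 * (ℓ * a * r ^ 2 / φ ^ 2) * ((ℓ * φ) ^ 2 / (27 * a * r ^ 2)) := by
            rw [h1, h2, ht2]
        _ = ℓ ^ 3 := by field_simp
    have hzm : zmin * zmin ^ (-(1 : ℝ) / 3) = zmin ^ ((2 : ℝ) / 3) := by
      nth_rewrite 1 [← Real.rpow_one zmin]
      rw [← Real.rpow_add hzmin]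
      norm_num
    have h2 : t ^ (-(1 : ℝ) / 3) = t ^ ((2 : ℝ) / 3) / t := by
      rw [eq_div_iff ht.ne']
      nth_rewrite 2 [← Real.rpow_one t]
      rw [← Real.rpow_add ht]
      norm_num
    have expand : 3 * zmin * s * (zmin ^ (-(1 : ℝ) / 3) - t ^ (-(1 : ℝ) / 3)) + ℓ * zmin / t
        = 3 * s * (zmin * zmin ^ (-(1 : ℝ) / 3))
          - (3 * s * t ^ ((2 : ℝ) / 3)) * zmin / t + ℓ * zmin / t := by
      rw [h2]; ring
    rw [expand, hzm, hkey]
    ring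
  · have hn' : (0 : ℝ) < (n : ℝ) := by exact_mod_cast hn
    have hx : (0 : ℝ) < (n : ℝ) / (2 * τ) := by positivity
    have hsq27 : 0 < Real.sqrt (27 * ℓ * a) := Real.sqrt_pos.2 (by positivity)
    have hrp : (0 : ℝ) < ((n : ℝ) / (2 * τ)) ^ ((3 : ℝ) / 2) := Real.rpow_pos_of_pos hx _
    set φ : ℝ := zmin * Real.sqrt (27 * ℓ * a) * r * ((n : ℝ) / (2 * τ)) ^ ((3 : ℝ) / 2) with hφ_def
    have hφ : 0 < φ := by positivity
    have hX : 0 < ℓ * a * r ^ 2 / φ ^ 2 := by positivity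
    apply pow3_inj (by positivity) hτ.le
    have h13 : ((ℓ * a * r ^ 2 / φ ^ 2) ^ ((1 : ℝ) / 3)) ^ 3 = ℓ * a * r ^ 2 / φ ^ 2 :=
      cube13 _ hX.le
    have h23 : (zmin ^ ((2 : ℝ) / 3)) ^ 3 = zmin ^ 2 := cube23 _ hzmin.le
    have hsq : Real.sqrt (27 * ℓ * a) ^ 2 = 27 * ℓ * a := Real.sq_sqrt (by positivity)
    have hcube : (((n : ℝ) / (2 * τ)) ^ ((3 : ℝ) / 2)) ^ 2 = ((n : ℝ) / (2 * τ)) ^ 3 := by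
      rw [← Real.rpow_natCast (((n : ℝ) / (2 * τ)) ^ ((3 : ℝ) / 2)) 2, ← Real.rpow_mul hx.le]
      norm_num
    have hφ2 : φ ^ 2 = zmin ^ 2 * (27 * ℓ * a) * r ^ 2 * ((n : ℝ) / (2 * τ)) ^ 3 := by
      rw [hφ_def]
      calc (zmin * Real.sqrt (27 * ℓ * a) * r * ((n : ℝ) / (2 * τ)) ^ ((3 : ℝ) / 2)) ^ 2
          = zmin ^ 2 * Real.sqrt (27 * ℓ * a) ^ 2 * r ^ 2 *
            (((n : ℝ) / (2 * τ)) ^ ((3 : ℝ) / 2)) ^ 2 := by ring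
        _ = zmin ^ 2 * (27 * ℓ * a) * r ^ 2 * ((n : ℝ) / (2 * τ)) ^ 3 := by
            rw [hsq, hcube]
    calc ((n : ℝ) / 2 * (3 * zmin ^ ((2 : ℝ) / 3) * (ℓ * a * r ^ 2 / φ ^ 2) ^ ((1 : ℝ) / 3))) ^ 3
        = ((n : ℝ) / 2) ^ 3 * 27 * (zmin ^ ((2 : ℝ) / 3)) ^ 3 *
          ((ℓ * a * r ^ 2 / φ ^ 2) ^ ((1 : ℝ) / 3)) ^ 3 := by ring
      _ = ((n : ℝ) / 2) ^ 3 * 27 * zmin ^ 2 *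
          (ℓ * a * r ^ 2 / (zmin ^ 2 * (27 * ℓ * a) * r ^ 2 * ((n : ℝ) / (2 * τ)) ^ 3)) := by
          rw [h13, h23, hφ2]
      _ = τ ^ 3 := by field_simp
end
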